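/- Let p and q be positive real numbers and R > 0. The Lebesgue volume (in ℝ⁴ ≅ ℂ²) of the region {(ζ₁, ζ₂) ∈ ℂ² : |ζ₁|^{2/p} + |ζ₂|^{2/q} < R} equals π² Γ(p+1) Γ(q+1) R^{p+q} / Γ(p+q+1). -/

import Mathlib

open MeasureTheory Real
open scoped NNReal ENNReal

section beta

lemma real_beta_scaled {a b R : ℝ} (ha : 0 < a) (hb : 0 < b) (hR : 0 < R) :
    ∫ x in (0:ℝ)..R, x ^ (a - 1) * (R - x) ^ (b - 1) =
      R ^ (a + b - 1) * (Gamma a * Gamma b / Gamma (a + b)) := by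
  have hGamma : (0:ℝ) < Gamma (a + b) := Real.Gamma_pos_of_pos (by linarith)
  have hbeta : Complex.betaIntegral a b = ((Gamma a * Gamma b / Gamma (a + b) : ℝ) : ℂ) := by
    have h := Complex.Gamma_mul_Gamma_eq_betaIntegral (s := (a:ℂ)) (t := (b:ℂ))
      (by simpa using ha) (by simpa using hb)
    have h2 : ((a:ℂ) + b) = ((a + b : ℝ) : ℂ) := by push_cast; ring
    rw [h2, Complex.Gamma_ofReal, Complex.Gamma_ofReal, Complex.Gamma_ofReal] at h
    have h3 : ((Gamma (a+b) : ℝ) : ℂ) ≠ 0 := by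
      simpa using hGamma.ne'
    rw [Complex.ofReal_div, Complex.ofReal_mul, eq_div_iff h3, mul_comm]
    exact h.symm
  have hofReal : ((∫ x in (0:ℝ)..R, x ^ (a - 1) * (R - x) ^ (b - 1) : ℝ) : ℂ) =
      ∫ x in (0:ℝ)..R, (x:ℂ) ^ ((a:ℂ) - 1) * ((R:ℂ) - x) ^ ((b:ℂ) - 1) := by
    rw [← intervalIntegral.integral_ofReal]
    refine intervalIntegral.integral_congr fun x hx => ?_
    rw [Set.uIcc_of_le hR.le] at hx
    have h1 : ((a:ℂ) - 1) = ((a - 1 : ℝ) : ℂ) := by push_cast; ring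
    have h2 : ((b:ℂ) - 1) = ((b - 1 : ℝ) : ℂ) := by push_cast; ring
    rw [h1, h2, show ((R:ℂ) - x) = ((R - x : ℝ) : ℂ) by push_cast; ring,
      ← Complex.ofReal_cpow hx.1 (a-1), ← Complex.ofReal_cpow (by linarith [hx.2]) (b-1),
      ← Complex.ofReal_mul]
  have := Complex.betaIntegral_scaled (a:ℂ) (b:ℂ) hR
  rw [← hofReal, hbeta] at this
  have h4 : ((R:ℂ)) ^ ((a:ℂ) + b - 1) = ((R ^ (a + b - 1) : ℝ) : ℂ) := by
    rw [Complex.ofReal_cpow hR.le]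
    push_cast
    ring_nf
  rw [h4, ← Complex.ofReal_mul] at this
  exact_mod_cast this

end beta

theorem volume_egg_domain (p q R : ℝ) (hp : 0 < p) (hq : 0 < q) (hR : 0 < R) :
    volume {ζ : ℂ × ℂ | ‖ζ.1‖ ^ (2 / p) + ‖ζ.2‖ ^ (2 / q) < R} =
      ENNReal.ofReal
        (π ^ 2 * Gamma (p + 1) * Gamma (q + 1) * R ^ (p + q) / Gamma (p + q + 1)) := by
  have hp2 : (0:ℝ) < 2 / p := by positivity
  have hq2 : (0:ℝ) < 2 / q := by positivity
  set f : ℂ → ℝ := fun x => π * max (R - ‖x‖ ^ (2 / p)) 0 ^ q with hf_def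
  have hcont : Continuous fun ζ : ℂ × ℂ => ‖ζ.1‖ ^ (2 / p) + ‖ζ.2‖ ^ (2 / q) :=
    ((continuous_norm.comp continuous_fst).rpow_const fun _ => Or.inr hp2.le).add
      ((continuous_norm.comp continuous_snd).rpow_const fun _ => Or.inr hq2.le)
  have hS : MeasurableSet {ζ : ℂ × ℂ | ‖ζ.1‖ ^ (2 / p) + ‖ζ.2‖ ^ (2 / q) < R} :=
    (isOpen_lt hcont continuous_const).measurableSet
  -- the volume of each slice
  have slice : ∀ x : ℂ, volume {y : ℂ | ‖x‖ ^ (2 / p) + ‖y‖ ^ (2 / q) < R} =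
      ENNReal.ofReal (f x) := by
    intro x
    rcases le_or_gt (R - ‖x‖ ^ (2 / p)) 0 with h | h
    · have he : {y : ℂ | ‖x‖ ^ (2 / p) + ‖y‖ ^ (2 / q) < R} = ∅ := by
        ext y
        simp only [Set.mem_setOf_eq, Set.mem_empty_iff_false, iff_false, not_lt]
        nlinarith [Real.rpow_nonneg (norm_nonneg y) (2 / q)]
      rw [he, measure_empty]
      simp only [hf_def]
      rw [max_eq_right h, Real.zero_rpow hq.ne', mul_zero, ENNReal.ofReal_zero]
    · have hset : {y : ℂ | ‖x‖ ^ (2 / p) + ‖y‖ ^ (2 / q) < R} =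
          Metric.ball (0 : ℂ) ((R - ‖x‖ ^ (2 / p)) ^ (q / 2)) := by
        ext y
        simp only [Set.mem_setOf_eq, Metric.mem_ball, dist_zero_right]
        rw [← lt_sub_iff_add_lt']
        rw [show q / 2 = (2 / q)⁻¹ by field_simp]
        exact (Real.lt_rpow_inv_iff_of_pos (norm_nonneg y) h.le hq2).symm
      rw [hset, Complex.volume_ball]
      simp only [hf_def]
      have h1 : ((R - ‖x‖ ^ (2 / p)) ^ (q / 2)) ^ (2:ℕ) = (R - ‖x‖ ^ (2 / p)) ^ q := by
        rw [← Real.rpow_natCast _ 2, ← Real.rpow_mul h.le]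
        norm_num
      rw [← ENNReal.ofReal_pow (Real.rpow_nonneg h.le _), h1, max_eq_left h.le,
        show ((NNReal.pi : ℝ≥0) : ℝ≥0∞) = ENNReal.ofReal π by
          rw [← NNReal.coe_real_pi, ENNReal.ofReal_coe_nnreal],
        ← ENNReal.ofReal_mul (Real.rpow_nonneg (by linarith) _), mul_comm]
  -- continuity, support and integrability of f
  have hf_cont : Continuous f := by
    apply continuous_const.mul
    exact ((continuous_const.sub
      (continuous_norm.rpow_const fun _ => Or.inr hp2.le)).max continuous_const).rpow_const
      fun _ => Or.inr hq.le
  have hf_supp : HasCompactSupport f := by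
    refine HasCompactSupport.intro (isCompact_closedBall (0:ℂ) (R ^ (p / 2))) fun x hx => ?_
    simp only [Metric.mem_closedBall, dist_zero_right, not_le] at hx
    have h1 : R < ‖x‖ ^ (2 / p) := by
      have := Real.rpow_lt_rpow (Real.rpow_nonneg hR.le _) hx hp2
      rwa [← Real.rpow_mul hR.le, show p / 2 * (2 / p) = 1 by field_simp, Real.rpow_one] at this
    simp only [hf_def, max_eq_right (by linarith : R - ‖x‖ ^ (2/p) ≤ 0),
      Real.zero_rpow hq.ne', mul_zero]
  have hf_int : Integrable f := hf_cont.integrable_of_hasCompactSupport hf_supp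
  have hf_nonneg : ∀ x, 0 ≤ f x :=
    fun x => mul_nonneg pi_pos.le (Real.rpow_nonneg (le_max_right _ _) _)
  -- Fubini
  have key : volume {ζ : ℂ × ℂ | ‖ζ.1‖ ^ (2 / p) + ‖ζ.2‖ ^ (2 / q) < R} =
      ∫⁻ x : ℂ, ENNReal.ofReal (f x) := by
    rw [MeasureTheory.Measure.volume_eq_prod ℂ ℂ, MeasureTheory.Measure.prod_apply hS]
    refine lintegral_congr fun x => ?_
    rw [show (Prod.mk x ⁻¹' {ζ : ℂ × ℂ | ‖ζ.1‖ ^ (2 / p) + ‖ζ.2‖ ^ (2 / q) < R})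
        = {y : ℂ | ‖x‖ ^ (2 / p) + ‖y‖ ^ (2 / q) < R} from rfl]
    exact slice x
  rw [key, ← ofReal_integral_eq_lintegral_ofReal hf_int (Filter.Eventually.of_forall hf_nonneg)]
  congr 1
  -- polar-type formula
  set g : ℝ → ℝ := fun r => π * max (R - r ^ (2 / p)) 0 ^ q with hg_def
  have step1 : ∫ x : ℂ, f x = 2 * (π * ∫ y in Set.Ioi (0:ℝ), y * g y) := by
    have h := MeasureTheory.integral_fun_norm_addHaar (volume : Measure ℂ) g
    rw [show (∫ x : ℂ, f x) = ∫ x : ℂ, g ‖x‖ from rfl, h, Complex.finrank_real_complex,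
      measureReal_def, Complex.volume_ball]
    simp only [smul_eq_mul, nsmul_eq_mul, Nat.cast_ofNat, pow_one]
    norm_num [ENNReal.toReal_mul, ENNReal.ofReal_one, NNReal.coe_real_pi]
  set G : ℝ → ℝ := fun t => (p / 2 * π) * (t ^ (p - 1) * max (R - t) 0 ^ q) with hG_def
  have step2 : ∫ y in Set.Ioi (0:ℝ), y * g y = ∫ t in Set.Ioi (0:ℝ), G t := by
    rw [← integral_comp_rpow_Ioi_of_pos (g := G) hp2]
    refine setIntegral_congr_fun measurableSet_Ioi fun x hx => ?_
    have hx0 : (0:ℝ) < x := hx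
    simp only [hG_def, hg_def, smul_eq_mul]
    have hxp : x ^ (2 / p - 1) * (x ^ (2 / p)) ^ (p - 1) = x := by
      rw [← Real.rpow_mul hx0.le, ← Real.rpow_add hx0,
        show 2 / p - 1 + 2 / p * (p - 1) = 1 by field_simp; ring, Real.rpow_one]
    rw [show 2 / p * x ^ (2 / p - 1) * (p / 2 * π * ((x ^ (2 / p)) ^ (p - 1)
          * max (R - x ^ (2 / p)) 0 ^ q))
        = (2 / p * (p / 2)) * (x ^ (2 / p - 1) * (x ^ (2 / p)) ^ (p - 1))
          * (π * max (R - x ^ (2 / p)) 0 ^ q) by ring,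
      hxp, show 2 / p * (p / 2) = 1 by field_simp, one_mul]
  have step3 : ∫ t in Set.Ioi (0:ℝ), G t
      = ∫ t in (0:ℝ)..R, (p / 2 * π) * (t ^ (p - 1) * (R - t) ^ q) := by
    rw [MeasureTheory.setIntegral_eq_of_subset_of_forall_diff_eq_zero measurableSet_Ioi
      Set.Ioc_subset_Ioi_self (f := G) (fun t ht => ?_), intervalIntegral.integral_of_le hR.le]
    · refine setIntegral_congr_fun measurableSet_Ioc fun t ht => ?_
      simp only [hG_def]
      rw [max_eq_left (by linarith [ht.2])]
    · simp only [Set.mem_diff, Set.mem_Ioi, Set.mem_Ioc, not_and, not_le] at ht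
      have hRt : R < t := ht.2 ht.1
      simp only [hG_def]
      rw [max_eq_right (by linarith), Real.zero_rpow hq.ne', mul_zero, mul_zero]
  have hbeta : ∫ t in (0:ℝ)..R, t ^ (p - 1) * (R - t) ^ q
      = R ^ (p + q) * (Gamma p * Gamma (q + 1) / Gamma (p + q + 1)) := by
    have h := real_beta_scaled hp (by linarith : (0:ℝ) < q + 1) hR
    rw [show q + 1 - 1 = q by ring, show p + (q + 1) - 1 = p + q by ring,
      show p + (q + 1) = p + q + 1 by ring] at h
    exact h
  rw [step1, step2, step3, intervalIntegral.integral_const_mul, hbeta]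
  have hG0 : Gamma (p + q + 1) ≠ 0 := (Real.Gamma_pos_of_pos (by linarith)).ne'
  rw [Real.Gamma_add_one hp.ne']
  field_simp
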